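/- Let k ≥ 3 be an integer and 1 ≤ i ≤ k-2. Let H_i be the graph obtained from the complete graph K_k by deleting i edges e_1,...,e_i that form two edge-disjoint matchings M_1 of size ⌊k/2⌋ and M_2 of size k-2-⌊k/2⌋ (taking the first i edges of M_1 followed by edges of M_2). If k ≠ 5 or i ≠ 3, then g_1(H_i) = (v(H_i)-2)/e(H_i) = (k-2)/(binom(k,2)-i). -/

import Mathlib

open SimpleGraph

noncomputable def vc {V : Type*} {G : SimpleGraph V} (H' : G.Subgraph) : ℕ := H'.verts.ncard
noncomputable def ec {V : Type*} {G : SimpleGraph V} (H' : G.Subgraph) : ℕ := H'.edgeSet.ncard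

/-- The subgraph is a clique: every two distinct vertices are adjacent. -/
def cliqueSub {V : Type*} {G : SimpleGraph V} (H' : G.Subgraph) : Prop :=
  H'.verts.Pairwise H'.Adj

/-- Values `(e(H')-1)/(v(H')-2)` over subgraphs with at least 3 vertices;
its greatest element is the maximum 2-density `m_2`. -/
def m2set {V : Type*} (G : SimpleGraph V) : Set ℚ :=
  {q | ∃ H' : G.Subgraph, 3 ≤ vc H' ∧ q = ((ec H' : ℚ) - 1) / ((vc H' : ℚ) - 2)}

/-- Values `e(H')/v(H')`; greatest element is the maximum density `m`. -/
def mset {V : Type*} (G : SimpleGraph V) : Set ℚ :=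
  {q | ∃ H' : G.Subgraph, 1 ≤ vc H' ∧ q = (ec H' : ℚ) / (vc H' : ℚ)}

/-- The set whose greatest element is `g_1(H)`. -/
def g1set {V : Type*} (G : SimpleGraph V) : Set ℚ :=
  {q | ∃ H' : G.Subgraph, ¬ (H' ≠ ⊤ ∧ cliqueSub H') ∧
    ((2 ≤ ec H' ∧ ec H' < ec (⊤ : G.Subgraph)) ∨ (ec H' = 0 ∧ vc H' = 2)) ∧
    q = ((vc (⊤ : G.Subgraph) : ℚ) - (vc H' : ℚ)) /
        ((ec (⊤ : G.Subgraph) : ℚ) - (ec H' : ℚ))}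

/-- The set whose least element is `g_2(H)`. -/
def g2set {V : Type*} (G : SimpleGraph V) : Set ℚ :=
  {q | ∃ H' : G.Subgraph, 2 ≤ ec H' ∧ ((H' ≠ ⊤ ∧ cliqueSub H') ∨ H' = ⊤) ∧
    q = ((vc H' : ℚ) - 2) / ((ec H' : ℚ) - 1)}

lemma two_mul_choose_two (n : ℕ) : 2 * n.choose 2 = n * (n - 1) := by
  rw [Nat.choose_two_right, Nat.mul_div_cancel']
  rcases n with _ | m
  · simp
  · simpa [Nat.succ_sub_one, mul_comm] using (Nat.even_mul_succ_self m).two_dvd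

lemma aux_arith (k n i e d : ℤ) (hk : 3 ≤ k) (hn3 : 3 ≤ n) (hnk : n + 1 ≤ k)
    (hi1 : 1 ≤ i) (hi2 : i + 2 ≤ k) (hd0 : 0 ≤ d) (he0 : 0 ≤ e)
    (hki : ¬(k = 5 ∧ i = 3))
    (c1 : 2*e + 2*d ≤ n*(n-1)) (c2 : 2*e + 2 ≤ n*(n-1)) (c3 : i ≤ d + 2*(k-n)) :
    2*(k-2)*e + 2*i*(n-2) ≤ k*(k-1)*(n-2) := by
  rcases le_or_gt k 5 with h5 | h6
  · have hn4 : n = 3 ∨ n = 4 := by omega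
    rcases hn4 with rfl | rfl <;> interval_cases k <;> omega
  · rcases le_or_gt i (2*(k-n)+1) with hA | hB
    · have key : (k-2)*(n+1) + 2*i ≤ k*(k-1) := by
        nlinarith [mul_nonneg (show (0:ℤ) ≤ k-6 by omega) (show (0:ℤ) ≤ k-n by omega)]
      nlinarith [mul_le_mul_of_nonneg_left (show 2*e ≤ (n-2)*(n+1) by nlinarith)
          (show (0:ℤ) ≤ k-2 by omega),
        mul_le_mul_of_nonneg_right key (show (0:ℤ) ≤ n-2 by omega)]
    · have h34 : 0 ≤ (n-3)*(n-4) := by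
        rcases le_or_gt n 4 with h | h
        · rcases le_or_gt n 3 with h' | h'
          · have : n = 3 := le_antisymm h' hn3
            simp [this]
          · have : n = 4 := le_antisymm h h'
            simp [this]
        · exact mul_nonneg (by omega) (by omega)
      nlinarith [mul_le_mul_of_nonneg_left (show 2*e ≤ n*(n-1) - 2*d by linarith)
          (show (0:ℤ) ≤ k-2 by omega),
        mul_le_mul_of_nonneg_left (show i - 2*(k-n) ≤ d by linarith)
          (show (0:ℤ) ≤ 2*(k-2) by omega),
        mul_le_mul_of_nonneg_right (show 2*(k-n)+2 ≤ i by linarith)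
          (show (0:ℤ) ≤ 2*(k-n) by omega),
        mul_nonneg (show (0:ℤ) ≤ k-n by omega) h34,
        mul_nonneg (mul_nonneg (show (0:ℤ) ≤ k-n by omega)
          (show (0:ℤ) ≤ k-n-1 by omega)) (show (0:ℤ) ≤ n-2 by omega)]

lemma card_nondiag_sym2 {α : Type*} [DecidableEq α] (s : Finset α) :
    (s.sym2.filter fun z => ¬ z.IsDiag).card = s.card.choose 2 := by
  have hdiag : (s.sym2.filter fun z => z.IsDiag) = s.image Sym2.diag := by
    ext z
    induction z using Sym2.ind with
    | _ a b =>
      simp only [Finset.mem_filter, Finset.mk_mem_sym2_iff, Finset.mem_image,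
        Sym2.mk_isDiag_iff]
      constructor
      · rintro ⟨⟨ha, hb⟩, rfl⟩
        exact ⟨a, ha, rfl⟩
      · rintro ⟨c, hc, hcz⟩
        have : c = a ∧ c = b := by
          have := Sym2.eq_iff.mp hcz
          tauto
        obtain ⟨rfl, rfl⟩ := this
        exact ⟨⟨hc, hc⟩, rfl⟩
  have h1 : (s.sym2.filter fun z => z.IsDiag).card
      + (s.sym2.filter fun z => ¬ z.IsDiag).card = s.sym2.card :=
    Finset.card_filter_add_card_filter_not _
  have h2 : (s.sym2.filter fun z => z.IsDiag).card = s.card := by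
    rw [hdiag, Finset.card_image_of_injective _ Sym2.diag_injective]
  have h3 : s.sym2.card = Nat.choose (s.card + 1) 2 := Finset.card_sym2 s
  have h4 : Nat.choose (s.card + 1) 2 = s.card.choose 1 + s.card.choose 2 :=
    Nat.choose_succ_succ _ _
  simp [Nat.choose_one_right] at h4
  omega

lemma mem_sym2_inf_sup {α : Type*} [LinearOrder α] (z : Sym2 α) (v : α) (h : v ∈ z) :
    v = z.inf ∨ v = z.sup := by
  induction z using Sym2.ind with
  | _ a b =>
    rw [Sym2.mem_iff] at h
    rcases le_total a b with hab | hab <;> rcases h with rfl | rfl <;>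
      simp [Sym2.inf_mk, Sym2.sup_mk, hab, inf_eq_left.mpr, sup_eq_right.mpr]

lemma inf_mem_sym2 {α : Type*} [LinearOrder α] (z : Sym2 α) : z.inf ∈ z := by
  induction z using Sym2.ind with
  | _ a b => rcases le_total a b with hab | hab <;> simp [Sym2.inf_mk, hab, Sym2.mem_iff]

lemma sup_mem_sym2 {α : Type*} [LinearOrder α] (z : Sym2 α) : z.sup ∈ z := by
  induction z using Sym2.ind with
  | _ a b => rcases le_total a b with hab | hab <;> simp [Sym2.sup_mk, hab, Sym2.mem_iff]

set_option maxHeartbeats 2000000 in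
/-- For `H_i = K_k` minus `i` edges taken from two edge-disjoint matchings
(first those of `M₁`, then those of `M₂`), if `k ≠ 5` or `i ≠ 3`, then
`g₁(H_i) = (k-2)/(C(k,2)-i)`. -/
theorem stmt_7 (k i : ℕ) (hk : 3 ≤ k) (hi1 : 1 ≤ i) (hi2 : i ≤ k - 2)
    (M1 M2 D : Finset (Sym2 (Fin k)))
    (hM1d : ∀ e ∈ M1, ¬ e.IsDiag) (hM2d : ∀ e ∈ M2, ¬ e.IsDiag)
    (hM1m : ∀ e ∈ M1, ∀ f ∈ M1, e ≠ f → ∀ v : Fin k, v ∈ e → v ∉ f)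
    (hM2m : ∀ e ∈ M2, ∀ f ∈ M2, e ≠ f → ∀ v : Fin k, v ∈ e → v ∉ f)
    (hdisj : Disjoint M1 M2)
    (hc1 : M1.card = k / 2) (hc2 : M2.card = k - 2 - k / 2)
    (hD : D ⊆ M1 ∪ M2) (hDcard : D.card = i) (hDord : D ⊆ M1 ∨ M1 ⊆ D)
    (hki : k ≠ 5 ∨ i ≠ 3) :
    IsGreatest
      (g1set ((⊤ : SimpleGraph (Fin k)).deleteEdges (↑D : Set (Sym2 (Fin k)))))
      (((k : ℚ) - 2) / ((k.choose 2 : ℚ) - (i : ℚ))) := by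
  classical
  set G : SimpleGraph (Fin k) := (⊤ : SimpleGraph (Fin k)).deleteEdges (↑D : Set (Sym2 (Fin k))) with hGdef
  have hDnd : ∀ e ∈ D, ¬ e.IsDiag := fun e he =>
    (Finset.mem_union.mp (hD he)).elim (hM1d e) (hM2d e)
  have hDsub : (↑D : Set (Sym2 (Fin k))) ⊆ (⊤ : SimpleGraph (Fin k)).edgeSet := by
    intro e he
    rw [edgeSet_top]
    exact hDnd e he
  have hek : 2 * k.choose 2 = k * (k - 1) := two_mul_choose_two k
  have hkk : k * 2 ≤ k * (k - 1) := Nat.mul_le_mul_left _ (by omega)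
  have hiC : i + 2 ≤ k.choose 2 := by omega
  have hvt : vc (⊤ : G.Subgraph) = k := by
    simp [vc, Subgraph.verts_top, Set.ncard_univ]
  have hTop : (⊤ : SimpleGraph (Fin k)).edgeSet.ncard = k.choose 2 := by
    rw [Set.ncard_eq_toFinset_card']
    have h := SimpleGraph.card_edgeFinset_top_eq_card_choose_two (V := Fin k)
    rw [Fintype.card_fin] at h
    rw [← h]
    congr 1
  have hct : ec (⊤ : G.Subgraph) = k.choose 2 - i := by
    rw [ec, Subgraph.edgeSet_top, hGdef, edgeSet_deleteEdges, Set.ncard_diff hDsub,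
      hTop, Set.ncard_coe_finset, hDcard]
  have hcast : ((k.choose 2 - i : ℕ) : ℚ) = (k.choose 2 : ℚ) - i :=
    Nat.cast_sub (by omega)
  constructor
  · -- membership
    have h01 : (⟨0, by omega⟩ : Fin k) ≠ ⟨1, by omega⟩ := by simp [Fin.ext_iff]
    let H0 : G.Subgraph :=
      { verts := ({⟨0, by omega⟩, ⟨1, by omega⟩} : Set (Fin k)), Adj := fun _ _ => False,
        adj_sub := fun h => h.elim, edge_vert := fun h => h.elim,
        symm := ⟨fun _ _ h => h⟩ }
    have he0 : ec H0 = 0 := by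
      rw [ec]
      convert Set.ncard_empty (Sym2 (Fin k)) using 2
      ext z
      induction z using Sym2.ind with
      | _ a b =>
        simp only [Subgraph.mem_edgeSet, Set.mem_empty_iff_false]
        exact Iff.rfl
    have hv2 : vc H0 = 2 := by
      rw [vc]
      show ({⟨0, by omega⟩, ⟨1, by omega⟩} : Set (Fin k)).ncard = 2
      exact Set.ncard_pair h01
    refine ⟨H0, ?_, Or.inr ⟨he0, hv2⟩, ?_⟩
    · rintro ⟨-, hcl⟩
      exact hcl (Set.mem_insert _ _) (Set.mem_insert_iff.mpr (Or.inr rfl)) h01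
    · rw [hvt, hct, he0, hv2, hcast]
      norm_num
  · -- upper bound
    rintro q ⟨H', hnc, hcase, rfl⟩
    have hiCq : (i : ℚ) + 2 ≤ (k.choose 2 : ℚ) := by exact_mod_cast hiC
    rcases hcase with ⟨he2, heE⟩ | ⟨he0, hv2⟩
    swap
    · rw [hvt, hct, he0, hv2, hcast]
      norm_num
    have hnetop : H' ≠ ⊤ := by
      rintro rfl
      exact lt_irrefl _ heE
    have hncl : ¬ cliqueSub H' := fun hc => hnc ⟨hnetop, hc⟩
    set S : Finset (Fin k) := H'.verts.toFinset with hSdef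
    have hn : vc H' = S.card := by rw [vc, Set.ncard_eq_toFinset_card']
    have hnk : S.card ≤ k := by simpa using S.card_le_univ
    have hPcard : (S.sym2.filter fun z => ¬ z.IsDiag).card = S.card.choose 2 :=
      card_nondiag_sym2 S
    set P : Finset (Sym2 (Fin k)) := S.sym2.filter (fun z => ¬ z.IsDiag) with hPdef
    set EF : Finset (Sym2 (Fin k)) := H'.edgeSet.toFinset with hEFdef
    have hecEF : ec H' = EF.card := by rw [ec, Set.ncard_eq_toFinset_card']
    have hmemS : ∀ {a b : Fin k}, H'.Adj a b → a ∈ S := fun h =>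
      Set.mem_toFinset.mpr (H'.edge_vert h)
    have hEFP : EF ⊆ P := by
      intro z
      induction z using Sym2.ind with
      | _ a b =>
        intro hz
        rw [hEFdef, Set.mem_toFinset, Subgraph.mem_edgeSet] at hz
        refine Finset.mem_filter.mpr ⟨Finset.mk_mem_sym2_iff.mpr ⟨hmemS hz, hmemS hz.symm⟩, ?_⟩
        simpa [Sym2.mk_isDiag_iff] using (H'.adj_sub hz).ne
    set Dfil : Finset (Sym2 (Fin k)) := D.filter (fun z => ∀ v ∈ z, v ∈ S) with hDfil
    have hDfilP : Dfil ⊆ P := by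
      intro z hz
      rw [hDfil, Finset.mem_filter] at hz
      exact Finset.mem_filter.mpr ⟨Finset.mem_sym2_iff.mpr hz.2, hDnd z hz.1⟩
    have hdisjED : Disjoint EF Dfil := by
      rw [Finset.disjoint_left]
      intro z hz hz2
      have h1 : z ∈ G.edgeSet := H'.edgeSet_subset (Set.mem_toFinset.mp hz)
      rw [hGdef, edgeSet_deleteEdges] at h1
      exact h1.2 (Finset.mem_coe.mpr (Finset.mem_filter.mp hz2).1)
    have c1 : EF.card + Dfil.card ≤ P.card := by
      rw [← Finset.card_union_of_disjoint hdisjED]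
      exact Finset.card_le_card (Finset.union_subset hEFP hDfilP)
    have c2 : EF.card + 1 ≤ P.card := by
      rw [cliqueSub, Set.Pairwise] at hncl
      push_neg at hncl
      obtain ⟨a, ha, b, hb, hab, hnadj⟩ := hncl
      have hzP : s(a,b) ∈ P := Finset.mem_filter.mpr
        ⟨Finset.mk_mem_sym2_iff.mpr ⟨Set.mem_toFinset.mpr ha, Set.mem_toFinset.mpr hb⟩,
         by simpa [Sym2.mk_isDiag_iff] using hab⟩
      have hzEF : s(a,b) ∉ EF := by
        rw [hEFdef, Set.mem_toFinset, Subgraph.mem_edgeSet]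
        exact hnadj
      calc EF.card + 1 = (insert s(a,b) EF).card := (Finset.card_insert_of_notMem hzEF).symm
        _ ≤ P.card := Finset.card_le_card (Finset.insert_subset hzP hEFP)
    have c3 : i ≤ Dfil.card + 2 * (k - S.card) := by
      set Dout : Finset (Sym2 (Fin k)) := D.filter (fun z => ¬ ∀ v ∈ z, v ∈ S) with hDout
      have hsplit : Dfil.card + Dout.card = D.card :=
        Finset.card_filter_add_card_filter_not _
      have hbound : Dout.card ≤ 2 * (k - S.card) := by
        have hmap : ∀ z ∈ Dout,
            ((if z.inf ∈ S then z.sup else z.inf, decide (z ∈ M1)) : Fin k × Bool)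
            ∈ (Sᶜ ×ˢ (Finset.univ : Finset Bool)) := by
          intro z hz
          rw [hDout, Finset.mem_filter] at hz
          obtain ⟨hzD, hz2⟩ := hz
          push_neg at hz2
          obtain ⟨v, hvz, hvS⟩ := hz2
          rw [Finset.mem_product]
          refine ⟨Finset.mem_compl.mpr ?_, Finset.mem_univ _⟩
          rcases mem_sym2_inf_sup z v hvz with hv | hv
          · rw [← hv] at *
            simp [hvS]
          · rw [← hv] at *
            by_cases h : z.inf ∈ S
            · simp [h, hvS]
            · simp [h]
        have hinj : Set.InjOn
            (fun z : Sym2 (Fin k) =>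
              ((if z.inf ∈ S then z.sup else z.inf, decide (z ∈ M1)) : Fin k × Bool)) Dout := by
          intro z1 h1 z2 h2 heq
          simp only [Prod.mk.injEq, decide_eq_decide] at heq
          obtain ⟨hv, hM⟩ := heq
          set v := (if z1.inf ∈ S then z1.sup else z1.inf) with hvdef
          have hv1 : v ∈ z1 := by
            rw [hvdef]
            split
            · exact sup_mem_sym2 z1
            · exact inf_mem_sym2 z1
          have hv2 : v ∈ z2 := by
            rw [hv]
            split
            · exact sup_mem_sym2 z2
            · exact inf_mem_sym2 z2
          have hz1D : z1 ∈ D := (Finset.mem_filter.mp (by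
            rw [← hDout]; exact Finset.mem_coe.mp h1)).1
          have hz2D : z2 ∈ D := (Finset.mem_filter.mp (by
            rw [← hDout]; exact Finset.mem_coe.mp h2)).1
          by_contra hne
          rcases Finset.mem_union.mp (hD hz1D) with hA | hA
          · exact hM1m z1 hA z2 (hM.mp hA) hne v hv1 hv2
          · have hz1M1 : z1 ∉ M1 := fun h => (Finset.disjoint_left.mp hdisj h) hA
            have hz2M1 : z2 ∉ M1 := fun h => hz1M1 (hM.mpr h)
            have hB : z2 ∈ M2 := (Finset.mem_union.mp (hD hz2D)).resolve_left hz2M1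
            exact hM2m z1 hA z2 hB hne v hv1 hv2
        have hle := Finset.card_le_card_of_injOn _ hmap hinj
        simp only [Finset.card_product, Finset.card_compl, Fintype.card_fin,
          Finset.card_univ, Fintype.card_bool] at hle
        omega
      omega
    have h2cn : 2 * S.card.choose 2 = S.card * (S.card - 1) := two_mul_choose_two S.card
    have he2' : 2 ≤ EF.card := by rw [← hecEF]; exact he2
    have hn3 : 3 ≤ S.card := by
      by_contra h
      push_neg at h
      have h1 : S.card * (S.card - 1) ≤ 2 * 1 := Nat.mul_le_mul (by omega) (by omega)
      omega
    have heEn : EF.card < k.choose 2 - i := by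
      rw [← hecEF, ← hct]
      exact heE
    rw [hvt, hct, hn, hecEF, hcast]
    have hq1 : (EF.card : ℚ) < (k.choose 2 : ℚ) - i := by
      rw [← hcast]
      exact_mod_cast heEn
    rw [div_le_div_iff₀ (by linarith) (by linarith)]
    have hCval : (k.choose 2 : ℚ) = (k : ℚ) * ((k:ℚ) - 1) / 2 := by
      have : 2 * (k.choose 2 : ℚ) = (k:ℚ) * ((k:ℚ) - 1) := by
        have h' := hek
        zify [show 1 ≤ k by omega] at h'
        exact_mod_cast h'
      linarith
    rcases eq_or_lt_of_le hnk with hEq | hLt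
    · rw [hEq]
      have hk3 : (3:ℚ) ≤ k := by exact_mod_cast hk
      nlinarith [hq1]
    · have c1n : 2*EF.card + 2*Dfil.card ≤ S.card * (S.card - 1) := by omega
      have c2n : 2*EF.card + 2 ≤ S.card * (S.card - 1) := by omega
      have c1' : 2*(EF.card:ℤ) + 2*(Dfil.card:ℤ) ≤ (S.card:ℤ)*((S.card:ℤ)-1) := by
        have := c1n
        zify [show 1 ≤ S.card by omega] at this
        linarith
      have c2' : 2*(EF.card:ℤ) + 2 ≤ (S.card:ℤ)*((S.card:ℤ)-1) := by
        have := c2n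
        zify [show 1 ≤ S.card by omega] at this
        linarith
      have c3' : (i:ℤ) ≤ (Dfil.card:ℤ) + 2*((k:ℤ)-(S.card:ℤ)) := by
        have := c3
        zify [hnk] at this
        linarith
      have hZ := aux_arith k S.card i EF.card Dfil.card (by exact_mod_cast hk)
        (by exact_mod_cast hn3) (by exact_mod_cast hLt) (by exact_mod_cast hi1)
        (by
          have h9 : i + 2 ≤ k := by omega
          exact_mod_cast h9)
        (by positivity) (by positivity)
        (by
          rintro ⟨h5, h3⟩
          rcases hki with h | h
          · exact h (by exact_mod_cast h5)
          · exact h (by exact_mod_cast h3))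
        c1' c2' c3'
      have hQ : 2*((k:ℚ)-2)*(EF.card:ℚ) + 2*(i:ℚ)*((S.card:ℚ)-2)
          ≤ (k:ℚ)*((k:ℚ)-1)*((S.card:ℚ)-2) := by exact_mod_cast hZ
      rw [hCval]
      nlinarith [hQ]
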